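/- arXiv:1309.4384 — 2 statements merged into one kernel-verified Lean document; each statement's English description precedes it below -/
import Mathlib

section
/- Let f : Z_p → Q_p be a continuous function and let p be an odd prime. If the Volkenborn integral ∫_{Z_p} f(a) da := lim_{N→∞} p^{-N} Σ_{a=0}^{p^N - 1} f(a) exists for f(a) = a^k with k a nonnegative integer, then its value equals the k-th Bernoulli number B_k. -/
open Filter Topology Finset

/-- If the Volkenborn integral `∫_{ℤ_p} a^k da = lim_N p^{-N} Σ_{a=0}^{p^N-1} a^k` exists,
then its value is the `k`-th Bernoulli number `B_k` (with the convention `B₁ = -1/2`). -/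
theorem volkenborn_integral_pow_eq_bernoulli (p : ℕ) [Fact p.Prime] (hp : Odd p)
    (k : ℕ) (L : ℚ_[p])
    (h : Tendsto
      (fun N : ℕ => ((p : ℚ_[p]) ^ N)⁻¹ * ∑ a ∈ Finset.range (p ^ N), (a : ℚ_[p]) ^ k)
      atTop (𝓝 L)) :
    L = ((bernoulli k : ℚ) : ℚ_[p]) := by
  have hp0 : (p : ℚ_[p]) ≠ 0 := by
    exact_mod_cast Nat.cast_ne_zero.mpr (Fact.out (p := p.Prime)).ne_zero
  have key : ∀ N : ℕ,
      ((p : ℚ_[p]) ^ N)⁻¹ * ∑ a ∈ Finset.range (p ^ N), (a : ℚ_[p]) ^ k =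
      ∑ i ∈ Finset.range (k + 1),
        ((bernoulli i * ((k + 1).choose i) / (k + 1) : ℚ) : ℚ_[p]) *
          (p : ℚ_[p]) ^ (N * (k - i)) := by
    intro N
    have h1 : (∑ a ∈ Finset.range (p ^ N), (a : ℚ_[p]) ^ k) =
        ∑ i ∈ Finset.range (k + 1),
          ((bernoulli i * ((k + 1).choose i) / (k + 1) : ℚ) : ℚ_[p]) *
            (p : ℚ_[p]) ^ (N * (k + 1 - i)) := by
      have := congrArg (fun q : ℚ => (q : ℚ_[p])) (sum_range_pow (p ^ N) k)
      push_cast at this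
      rw [this]
      refine Finset.sum_congr rfl fun i hi => ?_
      have hk1 : ((k : ℚ_[p]) + 1) ≠ 0 := Nat.cast_add_one_ne_zero k
      rw [← pow_mul]
      push_cast
      field_simp
    rw [h1, Finset.mul_sum]
    refine Finset.sum_congr rfl fun i hi => ?_
    have hik : i ≤ k := Nat.lt_succ_iff.mp (Finset.mem_range.mp hi)
    have : N * (k + 1 - i) = N + N * (k - i) := by
      rw [show k + 1 - i = (k - i) + 1 by omega]; ring
    rw [this, pow_add]
    have hk1 : ((k : ℚ_[p]) + 1) ≠ 0 := Nat.cast_add_one_ne_zero k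
    have hpN : (p : ℚ_[p]) ^ N ≠ 0 := pow_ne_zero _ hp0
    push_cast
    field_simp
  have h2 : Tendsto
      (fun N : ℕ => ∑ i ∈ Finset.range (k + 1),
        ((bernoulli i * ((k + 1).choose i) / (k + 1) : ℚ) : ℚ_[p]) *
          (p : ℚ_[p]) ^ (N * (k - i)))
      atTop (𝓝 ((bernoulli k : ℚ) : ℚ_[p])) := by
    have hsplit : ∀ N : ℕ, (∑ i ∈ Finset.range (k + 1),
        ((bernoulli i * ((k + 1).choose i) / (k + 1) : ℚ) : ℚ_[p]) *
          (p : ℚ_[p]) ^ (N * (k - i))) =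
        (∑ i ∈ Finset.range k,
          ((bernoulli i * ((k + 1).choose i) / (k + 1) : ℚ) : ℚ_[p]) *
            (p : ℚ_[p]) ^ (N * (k - i))) + ((bernoulli k : ℚ) : ℚ_[p]) := by
      intro N
      rw [Finset.sum_range_succ]
      congr 1
      have : ((k + 1).choose k : ℚ) = (k + 1 : ℚ) := by
        rw [Nat.choose_succ_self_right]; push_cast; ring
      rw [Nat.sub_self, Nat.mul_zero, pow_zero, mul_one, this]
      norm_cast
      field_simp
    simp only [hsplit]
    have h3 : Tendsto (fun N : ℕ => ∑ i ∈ Finset.range k,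
        ((bernoulli i * ((k + 1).choose i) / (k + 1) : ℚ) : ℚ_[p]) *
          (p : ℚ_[p]) ^ (N * (k - i))) atTop (𝓝 0) := by
      have : (0 : ℚ_[p]) = ∑ i ∈ Finset.range k, 0 := by simp
      rw [this]
      refine tendsto_finset_sum _ fun i hi => ?_
      have hik : i < k := Finset.mem_range.mp hi
      rw [show (0 : ℚ_[p]) = ((bernoulli i * ((k + 1).choose i) / (k + 1) : ℚ) : ℚ_[p]) * 0
        by ring]
      refine Tendsto.const_mul _ ?_
      have hpow : Tendsto (fun m : ℕ => (p : ℚ_[p]) ^ m) atTop (𝓝 0) :=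
        tendsto_pow_atTop_nhds_zero_of_norm_lt_one Padic.norm_p_lt_one
      exact hpow.comp (tendsto_atTop_mono (fun N => Nat.le_mul_of_pos_right N (by omega))
        tendsto_id)
    have := h3.add (tendsto_const_nhds (x := ((bernoulli k : ℚ) : ℚ_[p])))
    simpa using this
  exact tendsto_nhds_unique (by simpa only [key] using h) h2
end

section
/- Let p be an odd prime, s ∈ Z_p, and x, y ∈ C_p^× with |x - y|_p < |y|_p and v_p(x) = v_p(y) = 0. Then |⟨x⟩^s - ⟨y⟩^s|_p ≤ |x - y|_p; in particular x ↦ ⟨x⟩^s is Lipschitz continuous (with constant 1) on each disc {x : |x-y|_p < |y|_p} with |y|_p = 1. -/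
open Filter Topology

/-- The Teichmüller representative of `x ∈ ℤ_[p]`, `x̂ = lim_n x^(p^(n!))`. -/
noncomputable def teich (p : ℕ) [Fact p.Prime] (x : ℤ_[p]) : ℤ_[p] :=
  limUnder atTop (fun n : ℕ => x ^ p ^ (Nat.factorial n))

/-- The generalized binomial coefficient `C(s, n)` in `ℚ_[p]`. -/
noncomputable def padicBinom (p : ℕ) [Fact p.Prime] (s : ℚ_[p]) (n : ℕ) : ℚ_[p] :=
  (∏ i ∈ Finset.range n, (s - i)) / (Nat.factorial n : ℚ_[p])

/-- `t ^ s`, defined by the binomial series. -/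
noncomputable def padicPow (p : ℕ) [Fact p.Prime] (s : ℤ_[p]) (t : ℚ_[p]) : ℚ_[p] :=
  ∑' n : ℕ, padicBinom p (s : ℚ_[p]) n * (t - 1) ^ n

open scoped Nat

variable {p : ℕ} [hp : Fact p.Prime]

lemma norm_le_inv_of_toZMod_eq_zero (z : ℤ_[p]) (h : PadicInt.toZMod z = 0) :
    ‖z‖ ≤ (p : ℝ)⁻¹ := by
  have hz : z ∈ Ideal.span {(p : ℤ_[p]) ^ 1} := by
    rw [pow_one, ← PadicInt.maximalIdeal_eq_span_p, ← PadicInt.ker_toZMod]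
    exact h
  have := (PadicInt.norm_le_pow_iff_mem_span_pow z 1).2 hz
  simpa using this

lemma frob_step (x : ℤ_[p]) : ‖x ^ p - x‖ ≤ (p : ℝ)⁻¹ := by
  apply norm_le_inv_of_toZMod_eq_zero
  rw [map_sub, map_pow, ZMod.pow_card, sub_self]

lemma pow_p_sub_pow_p (a b : ℤ_[p]) (h : ‖a - b‖ ≤ (p : ℝ)⁻¹) :
    ‖a ^ p - b ^ p‖ ≤ ‖a - b‖ * (p : ℝ)⁻¹ := by
  set g : ℤ_[p] := ∑ i ∈ Finset.range p, a ^ i * b ^ (p - 1 - i) with hg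
  have hdvd : (a - b) ∣ g - p * b ^ (p - 1) := by
    have hpb : (p : ℤ_[p]) * b ^ (p - 1) = ∑ i ∈ Finset.range p, b ^ i * b ^ (p - 1 - i) := by
      rw [Finset.sum_congr rfl fun i hi => ?_, Finset.sum_const, Finset.card_range,
        nsmul_eq_mul]
      rw [← pow_add]
      congr 1
      have := Finset.mem_range.1 hi
      omega
    rw [hg, hpb, ← Finset.sum_sub_distrib]
    apply Finset.dvd_sum
    intro i _
    rw [← sub_mul]
    exact Dvd.dvd.mul_right (sub_dvd_pow_sub_pow a b i) _
  obtain ⟨c, hc⟩ := hdvd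
  have hgnorm : ‖g‖ ≤ (p : ℝ)⁻¹ := by
    have : g = p * b ^ (p - 1) + (a - b) * c := by rw [← hc]; ring
    rw [this]
    refine (IsUltrametricDist.norm_add_le_max _ _).trans (max_le ?_ ?_)
    · rw [norm_mul, PadicInt.norm_p]
      calc (p:ℝ)⁻¹ * ‖b ^ (p-1)‖ ≤ (p:ℝ)⁻¹ * 1 := by
            exact mul_le_mul_of_nonneg_left (PadicInt.norm_le_one _) (by positivity)
        _ = (p:ℝ)⁻¹ := mul_one _
    · rw [norm_mul]
      calc ‖a - b‖ * ‖c‖ ≤ (p:ℝ)⁻¹ * 1 :=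
            mul_le_mul h (PadicInt.norm_le_one _) (norm_nonneg _) (by positivity)
        _ = (p:ℝ)⁻¹ := mul_one _
  have key : a ^ p - b ^ p = g * (a - b) := (geom_sum₂_mul a b p).symm
  rw [key, norm_mul, mul_comm]
  exact mul_le_mul_of_nonneg_left hgnorm (norm_nonneg _)

lemma pow_p_pow_sub (a b : ℤ_[p]) (h : ‖a - b‖ ≤ (p : ℝ)⁻¹) (k : ℕ) :
    ‖a ^ p ^ k - b ^ p ^ k‖ ≤ ‖a - b‖ * ((p : ℝ)⁻¹) ^ k := by
  induction k with
  | zero => simp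
  | succ k ih =>
    have hp1 : (1:ℝ) ≤ p := by exact_mod_cast hp.out.one_lt.le
    have hinv : (p:ℝ)⁻¹ ≤ 1 := inv_le_one_of_one_le₀ hp1
    have hinv0 : (0:ℝ) ≤ (p:ℝ)⁻¹ := by positivity
    have hk : ‖a ^ p ^ k - b ^ p ^ k‖ ≤ (p : ℝ)⁻¹ := by
      refine ih.trans ?_
      calc ‖a - b‖ * ((p:ℝ)⁻¹) ^ k ≤ (p:ℝ)⁻¹ * 1 := by
            exact mul_le_mul h (pow_le_one₀ hinv0 hinv) (by positivity) (by positivity)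
        _ = (p:ℝ)⁻¹ := mul_one _
    have := pow_p_sub_pow_p (a ^ p ^ k) (b ^ p ^ k) hk
    rw [← pow_mul, ← pow_mul, ← pow_succ] at this
    refine this.trans ?_
    rw [pow_succ, ← mul_assoc]
    exact mul_le_mul_of_nonneg_right ih hinv0

lemma frob_iter (x : ℤ_[p]) (m : ℕ) : ‖x ^ p ^ m - x‖ ≤ (p : ℝ)⁻¹ := by
  induction m with
  | zero => simp
  | succ m ih =>
    have h1 : ‖(x ^ p ^ m) ^ p - x ^ p‖ ≤ (p : ℝ)⁻¹ := by
      have := pow_p_sub_pow_p (x ^ p ^ m) x ih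
      refine this.trans ?_
      have hp1 : (1:ℝ) ≤ p := by exact_mod_cast hp.out.one_lt.le
      calc ‖x ^ p ^ m - x‖ * (p:ℝ)⁻¹ ≤ 1 * (p:ℝ)⁻¹ :=
            mul_le_mul_of_nonneg_right (le_trans ih (inv_le_one_of_one_le₀ hp1)) (by positivity)
        _ = (p:ℝ)⁻¹ := one_mul _
    have : x ^ p ^ (m+1) - x = ((x ^ p ^ m) ^ p - x ^ p) + (x ^ p - x) := by
      rw [← pow_mul, ← pow_succ]; ring
    rw [this]
    exact (IsUltrametricDist.norm_add_le_max _ _).trans (max_le h1 (frob_step x))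

lemma teich_cauchy (x : ℤ_[p]) : CauchySeq (fun n : ℕ => x ^ p ^ (n !)) := by
  have hp1 : (1:ℝ) ≤ p := by exact_mod_cast hp.out.one_lt.le
  have hinv : (p:ℝ)⁻¹ < 1 := inv_lt_one_of_one_lt₀ (by exact_mod_cast hp.out.one_lt)
  apply cauchySeq_of_le_geometric (r := (p:ℝ)⁻¹) (C := 1) hinv
  intro n
  rw [dist_eq_norm]
  have hfac : (n+1)! = n ! * n + n ! := by
    rw [Nat.factorial_succ]; ring
  have h1 : x ^ p ^ (n !) - x ^ p ^ ((n+1)!) =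
      x ^ p ^ (n !) - (x ^ p ^ (n ! * n)) ^ p ^ (n !) := by
    rw [← pow_mul, ← pow_add, ← hfac]
  rw [h1]
  have h2 := pow_p_pow_sub x (x ^ p ^ (n ! * n)) ?_ (n !)
  · refine h2.trans ?_
    have hb : ‖x - x ^ p ^ (n ! * n)‖ ≤ 1 := PadicInt.norm_le_one _
    calc ‖x - x ^ p ^ (n ! * n)‖ * ((p:ℝ)⁻¹) ^ (n !) ≤ 1 * ((p:ℝ)⁻¹) ^ (n !) :=
          mul_le_mul_of_nonneg_right hb (by positivity)
      _ = ((p:ℝ)⁻¹) ^ (n !) := one_mul _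
      _ ≤ ((p:ℝ)⁻¹) ^ n := by
          exact pow_le_pow_of_le_one (by positivity) (inv_le_one_of_one_le₀ hp1)
            (Nat.self_le_factorial n)
      _ ≤ 1 * ((p:ℝ)⁻¹) ^ n := by rw [one_mul]
  · rw [norm_sub_rev]
    exact frob_iter x (n ! * n)

lemma teich_spec (x : ℤ_[p]) :
    Tendsto (fun n : ℕ => x ^ p ^ (n !)) atTop (𝓝 (teich p x)) := by
  obtain ⟨L, hL⟩ := cauchySeq_tendsto_of_complete (teich_cauchy x)
  have : teich p x = L := hL.limUnder_eq
  rw [this]; exact hL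

lemma teich_close (x : ℤ_[p]) : ‖x - teich p x‖ ≤ (p : ℝ)⁻¹ := by
  have h : Tendsto (fun n : ℕ => ‖x - x ^ p ^ (n !)‖) atTop (𝓝 ‖x - teich p x‖) :=
    ((tendsto_const_nhds.sub (teich_spec x)).norm)
  refine le_of_tendsto h (Eventually.of_forall fun n => ?_)
  rw [norm_sub_rev]
  exact frob_iter x (n !)

lemma teich_eq (x y : ℤ_[p]) (h : ‖x - y‖ ≤ (p : ℝ)⁻¹) : teich p x = teich p y := by
  have hx := teich_spec x
  have hy := teich_spec y
  have hsub : Tendsto (fun n : ℕ => x ^ p ^ (n !) - y ^ p ^ (n !)) atTop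
      (𝓝 (teich p x - teich p y)) := hx.sub hy
  have hzero : Tendsto (fun n : ℕ => x ^ p ^ (n !) - y ^ p ^ (n !)) atTop (𝓝 0) := by
    refine squeeze_zero_norm (a := fun n : ℕ => ((p:ℝ)⁻¹) ^ (n !)) (fun n => ?_) ?_
    · 
      refine (pow_p_pow_sub x y h (n !)).trans ?_
      calc ‖x - y‖ * ((p:ℝ)⁻¹) ^ (n !) ≤ 1 * ((p:ℝ)⁻¹) ^ (n !) :=
            mul_le_mul_of_nonneg_right (PadicInt.norm_le_one _) (by positivity)
        _ = ((p:ℝ)⁻¹) ^ (n !) := one_mul _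
    · have h1 : Tendsto (fun m : ℕ => ((p:ℝ)⁻¹) ^ m) atTop (𝓝 0) :=
        tendsto_pow_atTop_nhds_zero_of_lt_one (by positivity)
          (inv_lt_one_of_one_lt₀ (by exact_mod_cast hp.out.one_lt))
      exact h1.comp (tendsto_atTop_mono Nat.self_le_factorial tendsto_id)
  have := tendsto_nhds_unique hsub hzero
  exact sub_eq_zero.1 this

lemma teich_norm_one (x : ℤ_[p]) (hx : ‖x‖ = 1) : ‖teich p x‖ = 1 := by
  have h1 : ‖teich p x - x‖ < ‖x‖ := by
    rw [norm_sub_rev, hx]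
    exact lt_of_le_of_lt (teich_close x)
      (inv_lt_one_of_one_lt₀ (by exact_mod_cast hp.out.one_lt))
  have : teich p x = x + (teich p x - x) := by ring
  rw [this, IsUltrametricDist.norm_add_eq_max_of_norm_ne_norm (by
    rw [hx]; exact fun hc => absurd (hc ▸ h1) (by rw [hx]; exact lt_irrefl 1)),
    hx]
  exact max_eq_left (le_of_lt (hx ▸ h1))

lemma valfac_bound (hp3 : 3 ≤ p) {n : ℕ} (hn : 1 ≤ n) :
    2 * padicValNat p (n !) ≤ n - 1 := by
  have h := sub_one_mul_padicValNat_factorial (p := p) n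
  have hd : 1 ≤ (p.digits n).sum := by
    rcases Nat.eq_zero_or_pos (p.digits n).sum with h0 | h1
    · exfalso
      have hall : ∀ d ∈ p.digits n, d = 0 := by
        intro d hd
        exact Nat.eq_zero_of_le_zero (h0 ▸ List.single_le_sum (fun _ _ => Nat.zero_le _) _ hd)
      have hlast := Nat.getLast_digit_ne_zero p (Nat.one_le_iff_ne_zero.1 hn)
      exact hlast (hall _ (List.getLast_mem _))
    · exact h1
  have h2 : 2 * padicValNat p (n !) ≤ (p - 1) * padicValNat p (n !) :=
    Nat.mul_le_mul_right _ (by omega)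
  have h3 : (p.digits n).sum ≤ n := Nat.digit_sum_le p n
  omega

lemma binom_norm_le (s : ℚ_[p]) (hs : ‖s‖ ≤ 1) (n : ℕ) :
    ‖padicBinom p s n‖ ≤ (p : ℝ) ^ (padicValNat p (n !)) := by
  unfold padicBinom
  have hfac : ((n ! : ℚ_[p])) ≠ 0 := by exact_mod_cast Nat.factorial_ne_zero n
  have hnum : ‖∏ i ∈ Finset.range n, (s - (i : ℚ_[p]))‖ ≤ 1 := by
    rw [norm_prod]
    refine Finset.prod_le_one (fun i _ => norm_nonneg _) (fun i _ => ?_)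
    have h1 : ‖((i : ℚ_[p]))‖ ≤ 1 := by
      have := Padic.norm_int_le_one (p := p) (i : ℤ)
      simpa using this
    calc ‖s - (i : ℚ_[p])‖ = ‖s + (-(i : ℚ_[p]))‖ := by rw [sub_eq_add_neg]
      _ ≤ max ‖s‖ ‖(-(i : ℚ_[p]))‖ := IsUltrametricDist.norm_add_le_max _ _
      _ ≤ 1 := by rw [norm_neg]; exact max_le hs h1
  have hden : ‖((n ! : ℚ_[p]))‖ = ((p : ℝ) ^ (padicValNat p (n !) : ℤ))⁻¹ := by
    rw [Padic.norm_eq_zpow_neg_valuation hfac, Padic.valuation_natCast, zpow_neg]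
  rw [norm_div, hden, div_inv_eq_mul]
  calc ‖∏ i ∈ Finset.range n, (s - (i : ℚ_[p]))‖ * (p : ℝ) ^ (padicValNat p (n !) : ℤ)
      ≤ 1 * (p : ℝ) ^ (padicValNat p (n !) : ℤ) := by
        refine mul_le_mul_of_nonneg_right hnum ?_
        positivity
    _ = (p : ℝ) ^ (padicValNat p (n !)) := by rw [one_mul, zpow_natCast]

lemma binom_mul_pow_le_one (hp3 : 3 ≤ p) (s : ℚ_[p]) (hs : ‖s‖ ≤ 1) {n : ℕ} (hn : 1 ≤ n) :
    ‖padicBinom p s n‖ * ((p : ℝ)⁻¹) ^ (n - 1) ≤ 1 := by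
  have hv := valfac_bound hp3 hn
  have hb := binom_norm_le s hs n
  have hp1 : (1:ℝ) ≤ p := by exact_mod_cast hp.out.one_lt.le
  have hppos : (0:ℝ) < p := by positivity
  have hle : (p:ℝ) ^ padicValNat p (n !) ≤ (p:ℝ) ^ (n - 1) :=
    pow_le_pow_right₀ hp1 (by omega)
  calc ‖padicBinom p s n‖ * ((p : ℝ)⁻¹) ^ (n - 1)
      ≤ (p:ℝ) ^ (n - 1) * ((p : ℝ)⁻¹) ^ (n - 1) :=
        mul_le_mul_of_nonneg_right (hb.trans hle) (by positivity)
    _ = 1 := by rw [inv_pow, mul_inv_cancel₀ (by positivity)]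

lemma binom_term_le (hp3 : 3 ≤ p) (s : ℚ_[p]) (hs : ‖s‖ ≤ 1) (n : ℕ) :
    ‖padicBinom p s n‖ * ((p : ℝ)⁻¹) ^ n ≤ ((p : ℝ)⁻¹) ^ ((n + 1) / 2) := by
  have hp1 : (1:ℝ) ≤ p := by exact_mod_cast hp.out.one_lt.le
  have hpne : (p:ℝ) ≠ 0 := by positivity
  have hb := binom_norm_le s hs n
  have harith : padicValNat p (n !) + (n + 1) / 2 ≤ n := by
    rcases Nat.eq_zero_or_pos n with rfl | hn
    · simp [Nat.factorial]
    · have := valfac_bound hp3 hn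
      omega
  calc ‖padicBinom p s n‖ * ((p : ℝ)⁻¹) ^ n
      ≤ (p:ℝ) ^ padicValNat p (n !) * ((p : ℝ)⁻¹) ^ n :=
        mul_le_mul_of_nonneg_right hb (by positivity)
    _ = (p:ℝ) ^ ((padicValNat p (n !) : ℤ) - (n : ℤ)) := by
        rw [zpow_sub₀ hpne, zpow_natCast, zpow_natCast, div_eq_mul_inv, inv_pow]
    _ ≤ (p:ℝ) ^ (-(((n + 1) / 2 : ℕ) : ℤ)) := by
        apply zpow_le_zpow_right₀ hp1
        omega
    _ = ((p : ℝ)⁻¹) ^ ((n + 1) / 2) := by rw [zpow_neg, zpow_natCast, inv_pow]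

lemma summable_series (hp3 : 3 ≤ p) (s : ℚ_[p]) (hs : ‖s‖ ≤ 1) (t : ℚ_[p])
    (ht : ‖t - 1‖ ≤ (p : ℝ)⁻¹) :
    Summable (fun n : ℕ => padicBinom p s n * (t - 1) ^ n) := by
  apply NonarchimedeanAddGroup.summable_of_tendsto_cofinite_zero
  rw [Nat.cofinite_eq_atTop]
  refine squeeze_zero_norm (a := fun n : ℕ => ((p:ℝ)⁻¹) ^ ((n + 1) / 2)) (fun n => ?_) ?_
  · rw [norm_mul, norm_pow]
    refine le_trans ?_ (binom_term_le hp3 s hs n)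
    exact mul_le_mul_of_nonneg_left (pow_le_pow_left₀ (norm_nonneg _) ht n) (norm_nonneg _)
  · have h1 : Tendsto (fun m : ℕ => ((p:ℝ)⁻¹) ^ m) atTop (𝓝 0) :=
      tendsto_pow_atTop_nhds_zero_of_lt_one (by positivity)
        (inv_lt_one_of_one_lt₀ (by exact_mod_cast hp.out.one_lt))
    exact h1.comp (tendsto_atTop_atTop.2 fun b => ⟨2 * b, fun n hn => by omega⟩)

lemma series_lipschitz (hp3 : 3 ≤ p) (s : ℚ_[p]) (hs : ‖s‖ ≤ 1) (t u : ℚ_[p])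
    (ht : ‖t - 1‖ ≤ (p : ℝ)⁻¹) (hu : ‖u - 1‖ ≤ (p : ℝ)⁻¹) :
    ‖(∑' n : ℕ, padicBinom p s n * (t - 1) ^ n) -
      ∑' n : ℕ, padicBinom p s n * (u - 1) ^ n‖ ≤ ‖t - u‖ := by
  rw [← Summable.tsum_sub (summable_series hp3 s hs t ht) (summable_series hp3 s hs u hu)]
  refine IsUltrametricDist.norm_tsum_le_of_forall_le_of_nonneg (norm_nonneg _) (fun n => ?_)
  rw [← mul_sub, norm_mul]
  rcases Nat.eq_zero_or_pos n with rfl | hn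
  · simp
  have hgeom := geom_sum₂_mul (t - 1) (u - 1) n
  rw [sub_sub_sub_cancel_right] at hgeom
  rw [← hgeom, norm_mul, ← mul_assoc]
  have hg : ‖∑ i ∈ Finset.range n, (t - 1) ^ i * (u - 1) ^ (n - 1 - i)‖ ≤ ((p:ℝ)⁻¹) ^ (n - 1) := by
    refine IsUltrametricDist.norm_sum_le_of_forall_le_of_nonneg (by positivity) (fun i hi => ?_)
    rw [norm_mul, norm_pow, norm_pow]
    have hi' := Finset.mem_range.1 hi
    calc ‖t - 1‖ ^ i * ‖u - 1‖ ^ (n - 1 - i)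
        ≤ ((p:ℝ)⁻¹) ^ i * ((p:ℝ)⁻¹) ^ (n - 1 - i) :=
          mul_le_mul (pow_le_pow_left₀ (norm_nonneg _) ht i)
            (pow_le_pow_left₀ (norm_nonneg _) hu _) (by positivity) (by positivity)
      _ = ((p:ℝ)⁻¹) ^ (n - 1) := by rw [← pow_add]; congr 1; omega
  calc ‖padicBinom p s n‖ * ‖∑ i ∈ Finset.range n, (t - 1) ^ i * (u - 1) ^ (n - 1 - i)‖ * ‖t - u‖
      ≤ (‖padicBinom p s n‖ * ((p:ℝ)⁻¹) ^ (n - 1)) * ‖t - u‖ :=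
        mul_le_mul_of_nonneg_right
          (mul_le_mul_of_nonneg_left hg (norm_nonneg _)) (norm_nonneg _)
    _ ≤ 1 * ‖t - u‖ :=
        mul_le_mul_of_nonneg_right (binom_mul_pow_le_one hp3 s hs hn) (norm_nonneg _)
    _ = ‖t - u‖ := one_mul _

/-- For `s ∈ ℤ_p` and `p`-adic units `x, y` with `|x - y|_p < |y|_p`, one has
`|⟨x⟩^s - ⟨y⟩^s|_p ≤ |x - y|_p`; i.e. `x ↦ ⟨x⟩^s` is 1-Lipschitz on each disc
`{x : |x - y| < |y|}` with `|y| = 1`.  Here `⟨x⟩ = x / x̂`, with `x̂` the Teichmüller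
representative, and `⟨x⟩^s` is the binomial series. -/
theorem proj_pow_lipschitz (p : ℕ) [Fact p.Prime] (hodd : Odd p)
    (s : ℤ_[p]) (x y : ℤ_[p]) (hx : ‖x‖ = 1) (hy : ‖y‖ = 1) (hxy : ‖x - y‖ < ‖y‖) :
    ‖padicPow p s ((x : ℚ_[p]) / ((teich p x) : ℚ_[p])) -
        padicPow p s ((y : ℚ_[p]) / ((teich p y) : ℚ_[p]))‖ ≤ ‖x - y‖ := by
  have hp2 : 2 ≤ p := ‹Fact p.Prime›.out.two_le
  have hp3 : 3 ≤ p := by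
    obtain ⟨k, hk⟩ := hodd
    omega
  have hxy1 : ‖x - y‖ ≤ (p : ℝ)⁻¹ := by
    have hlt : ‖x - y‖ < 1 := by rwa [hy] at hxy
    obtain ⟨c, hc⟩ := (PadicInt.norm_lt_one_iff_dvd _).1 hlt
    rw [hc, norm_mul, PadicInt.norm_p]
    calc (p:ℝ)⁻¹ * ‖c‖ ≤ (p:ℝ)⁻¹ * 1 :=
          mul_le_mul_of_nonneg_left (PadicInt.norm_le_one _) (by positivity)
      _ = (p:ℝ)⁻¹ := mul_one _
  have hTeq : teich p y = teich p x := (teich_eq x y hxy1).symm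
  rw [hTeq]
  set T : ℤ_[p] := teich p x with hTdef
  have hTn : ‖T‖ = 1 := teich_norm_one x hx
  have hT0 : (T : ℚ_[p]) ≠ 0 := by
    simp only [ne_eq, PadicInt.coe_eq_zero]
    intro h
    rw [h, norm_zero] at hTn
    norm_num at hTn
  have hs1 : ‖(s : ℚ_[p])‖ ≤ 1 := by
    rw [PadicInt.padic_norm_e_of_padicInt]
    exact PadicInt.norm_le_one s
  have hcast : ∀ z : ℤ_[p], ‖(z : ℚ_[p]) - (T : ℚ_[p])‖ = ‖z - T‖ := by
    intro z
    rw [show (z : ℚ_[p]) - (T : ℚ_[p]) = ((z - T : ℤ_[p]) : ℚ_[p]) by push_cast; ring,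
      PadicInt.padic_norm_e_of_padicInt]
  have ht : ‖(x : ℚ_[p]) / (T : ℚ_[p]) - 1‖ ≤ (p : ℝ)⁻¹ := by
    rw [div_sub_one hT0, norm_div, PadicInt.padic_norm_e_of_padicInt, hTn, div_one, hcast]
    exact teich_close x
  have hu : ‖(y : ℚ_[p]) / (T : ℚ_[p]) - 1‖ ≤ (p : ℝ)⁻¹ := by
    rw [div_sub_one hT0, norm_div, PadicInt.padic_norm_e_of_padicInt, hTn, div_one, hcast]
    have hsplit : y - T = (y - x) + (x - T) := by ring
    rw [hsplit]
    refine (IsUltrametricDist.norm_add_le_max _ _).trans (max_le ?_ (teich_close x))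
    rwa [norm_sub_rev] at hxy1
  have key := series_lipschitz hp3 (s : ℚ_[p]) hs1 _ _ ht hu
  refine le_trans key (le_of_eq ?_)
  rw [div_sub_div_same, norm_div, PadicInt.padic_norm_e_of_padicInt, hTn, div_one,
    show (x : ℚ_[p]) - (y : ℚ_[p]) = ((x - y : ℤ_[p]) : ℚ_[p]) by push_cast; ring,
    PadicInt.padic_norm_e_of_padicInt]
end
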